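/- Let m, M, α be constants with 0 < m ≤ M, 1/2 < α ≤ 1, and let c = τμm > 0 with c ≠ 2α - 1. Suppose m/t ≤ η(t) ≤ M/t^α for 1 ≤ t ≤ T. Then Σ_{t=1}^{T} η(t)² exp(-τμ Σ_{u=t+1}^{T} η(u)) ≤ M² exp(c) [ 1/(T+1)^c + ((T+1)^{c - 2α + 1} - 1)/((c - 2α + 1)(T+1)^c) ]. -/

import Mathlib

open Finset

lemma log_succ_le (u : ℕ) (hu : 1 ≤ u) :
    Real.log ((u : ℝ) + 1) - Real.log u ≤ 1 / u := by
  have hupos : (0:ℝ) < u := by exact_mod_cast hu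
  have h1 : (0:ℝ) < ((u:ℝ) + 1) / u := by positivity
  have hkey := Real.log_le_sub_one_of_pos h1
  rw [Real.log_div (by positivity) hupos.ne'] at hkey
  have heq : ((u:ℝ) + 1) / u - 1 = 1 / u := by field_simp; ring
  linarith

lemma telescope_sum (g : ℕ → ℝ) : ∀ T t : ℕ, t ≤ T →
    ∑ u ∈ Icc (t + 1) T, (g (u + 1) - g u) = g (T + 1) - g (t + 1) := by
  intro T
  induction T with
  | zero => intro t ht; interval_cases t; simp
  | succ n ih =>
    intro t ht
    rcases Nat.lt_or_ge t (n + 1) with h' | h'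
    · rw [Finset.sum_Icc_succ_top (by omega), ih t (by omega)]; ring
    · have : t = n + 1 := by omega
      subst this
      rw [Finset.Icc_eq_empty (by omega)]; simp

lemma harmonic_lb (t T : ℕ) (ht : 1 ≤ t) (htT : t ≤ T) :
    Real.log ((T:ℝ) + 1) - Real.log t - 1 ≤ ∑ u ∈ Icc (t + 1) T, (1:ℝ) / u := by
  have tel := telescope_sum (fun u : ℕ => Real.log u) T t htT
  push_cast at tel
  have hsum : Real.log ((T:ℝ) + 1) - Real.log ((t:ℝ) + 1) ≤
      ∑ u ∈ Icc (t + 1) T, (1:ℝ) / u := by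
    rw [← tel]
    apply Finset.sum_le_sum
    intro u hu
    rw [Finset.mem_Icc] at hu
    exact log_succ_le u (by omega)
  have h2 : Real.log ((t:ℝ) + 1) - Real.log t ≤ 1 := by
    have := log_succ_le t ht
    have ht1 : (1:ℝ) ≤ t := by exact_mod_cast ht
    have : (1:ℝ) / t ≤ 1 := by
      rw [div_le_one (by linarith)]; linarith
    linarith [log_succ_le t ht]
  linarith

lemma sum_rpow_le (r : ℝ) (hr : r ≠ -1) (T : ℕ) (hT : 1 ≤ T) :
    ∑ t ∈ Icc 1 T, (t:ℝ) ^ r ≤ 1 + (((T:ℝ) + 1) ^ (r + 1) - 1) / (r + 1) := by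
  have hT1 : (1:ℝ) ≤ T := by exact_mod_cast hT
  rcases le_or_gt 0 r with hr0 | hr0
  · -- monotone case
    have hmono : MonotoneOn (fun x : ℝ => x ^ r) (Set.Icc ((1:ℕ):ℝ) (((T+1:ℕ)):ℝ)) :=
      (Real.monotoneOn_rpow_Ici_of_exponent_nonneg hr0).mono
        (fun x hx => le_trans (by norm_num) hx.1)
    have h := MonotoneOn.sum_le_integral_Ico (Nat.le_succ T |>.trans (le_refl _) |> fun _ => (by omega : 1 ≤ T + 1)) hmono
    rw [Finset.Ico_add_one_right_eq_Icc] at h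
    have hint : ∫ x in ((1:ℕ):ℝ)..(((T+1:ℕ)):ℝ), x ^ r
        = (((T:ℝ) + 1) ^ (r + 1) - 1) / (r + 1) := by
      rw [integral_rpow (Or.inl (by linarith))]
      push_cast
      rw [Real.one_rpow]
    calc ∑ t ∈ Icc 1 T, (t:ℝ) ^ r ≤ ∫ x in ((1:ℕ):ℝ)..(((T+1:ℕ)):ℝ), x ^ r := h
      _ = (((T:ℝ) + 1) ^ (r + 1) - 1) / (r + 1) := hint
      _ ≤ 1 + (((T:ℝ) + 1) ^ (r + 1) - 1) / (r + 1) := by linarith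
  · -- antitone case
    have hanti : AntitoneOn (fun x : ℝ => x ^ r) (Set.Icc ((1:ℕ):ℝ) ((T:ℕ):ℝ)) :=
      (Real.antitoneOn_rpow_Ioi_of_exponent_nonpos hr0.le).mono
        (fun x hx => lt_of_lt_of_le one_pos (by exact_mod_cast hx.1))
    have h := AntitoneOn.sum_le_integral_Ico hT hanti
    have hint : ∫ x in ((1:ℕ):ℝ)..((T:ℕ):ℝ), x ^ r
        = ((T:ℝ) ^ (r + 1) - 1) / (r + 1) := by
      rw [integral_rpow (Or.inr ⟨hr, by
        rw [Set.uIcc_of_le (by exact_mod_cast hT1)]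
        intro h0
        have := h0.1
        norm_num at this⟩)]
      push_cast
      rw [Real.one_rpow]
    have hre : ∑ i ∈ Ico 1 T, (((i + 1 : ℕ)) : ℝ) ^ r
        = ∑ x ∈ Ico (1 + 1) (T + 1), ((x : ℕ) : ℝ) ^ r :=
      Finset.sum_Ico_add' (fun x : ℕ => ((x : ℕ) : ℝ) ^ r) 1 T 1
    have hsplit : ∑ t ∈ Icc 1 T, (t:ℝ) ^ r
        = 1 + ∑ i ∈ Ico 1 T, ((i + 1 : ℕ) : ℝ) ^ r := by
      rw [← Finset.Ico_add_one_right_eq_Icc, Finset.sum_eq_sum_Ico_succ_bot (by omega), hre]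
      norm_num
    have hfinal : ((T:ℝ) ^ (r + 1) - 1) / (r + 1)
        ≤ (((T:ℝ) + 1) ^ (r + 1) - 1) / (r + 1) := by
      have hr1 : r + 1 ≠ 0 := by intro h0; apply hr; linarith
      rcases lt_or_gt_of_ne hr1 with hneg | hpos
      · rw [div_le_div_right_of_neg hneg]
        have := Real.rpow_le_rpow_of_nonpos (by linarith : (0:ℝ) < (T:ℝ))
          (by linarith : (T:ℝ) ≤ (T:ℝ) + 1) hneg.le
        linarith
      · have := Real.rpow_le_rpow (by linarith : (0:ℝ) ≤ (T:ℝ))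
          (by linarith : (T:ℝ) ≤ (T:ℝ) + 1) hpos.le
        rw [div_le_div_iff_of_pos_right hpos]
        linarith
    calc ∑ t ∈ Icc 1 T, (t:ℝ) ^ r
        = 1 + ∑ i ∈ Ico 1 T, ((i + 1 : ℕ) : ℝ) ^ r := hsplit
      _ ≤ 1 + ∫ x in ((1:ℕ):ℝ)..((T:ℕ):ℝ), x ^ r := by linarith [h]
      _ = 1 + ((T:ℝ) ^ (r + 1) - 1) / (r + 1) := by rw [hint]
      _ ≤ 1 + (((T:ℝ) + 1) ^ (r + 1) - 1) / (r + 1) := by linarith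

theorem stmt_16 (η : ℕ → ℝ) (m M α τ μ : ℝ) (T : ℕ) (hT : 1 ≤ T)
    (hm : 0 < m) (hmM : m ≤ M) (hα1 : 1 / 2 < α) (hα2 : α ≤ 1)
    (hτ : 0 < τ) (hμ : 0 < μ) (hcpos : 0 < τ * μ * m)
    (hcne : τ * μ * m ≠ 2 * α - 1)
    (hband : ∀ t ∈ Icc 1 T, m / t ≤ η t ∧ η t ≤ M / (t : ℝ) ^ α) :
    ∑ t ∈ Icc 1 T, η t ^ 2 * Real.exp (-τ * μ * ∑ u ∈ Icc (t + 1) T, η u) ≤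
      M ^ 2 * Real.exp (τ * μ * m) *
        (1 / ((T : ℝ) + 1) ^ (τ * μ * m) +
          (((T : ℝ) + 1) ^ (τ * μ * m - 2 * α + 1) - 1) /
            ((τ * μ * m - 2 * α + 1) * ((T : ℝ) + 1) ^ (τ * μ * m))) := by
  have hM : 0 < M := lt_of_lt_of_le hm hmM
  set c := τ * μ * m with hc
  have hTpos : (0:ℝ) < (T:ℝ) + 1 := by positivity
  have key : ∀ t ∈ Icc 1 T,
      η t ^ 2 * Real.exp (-τ * μ * ∑ u ∈ Icc (t + 1) T, η u) ≤
        M ^ 2 * Real.exp c / ((T:ℝ) + 1) ^ c * (t:ℝ) ^ (c - 2 * α) := by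
    intro t ht
    rw [Finset.mem_Icc] at ht
    have ht1 : (1:ℝ) ≤ (t:ℝ) := by exact_mod_cast ht.1
    have htpos : (0:ℝ) < (t:ℝ) := lt_of_lt_of_le one_pos ht1
    have hηt := hband t (Finset.mem_Icc.2 ht)
    have hη0 : 0 ≤ η t := le_trans (by positivity) hηt.1
    have h1 : η t ^ 2 ≤ (M / (t:ℝ) ^ α) ^ 2 := pow_le_pow_left₀ hη0 hηt.2 2
    have hS : m * (Real.log ((T:ℝ) + 1) - Real.log t - 1) ≤ ∑ u ∈ Icc (t + 1) T, η u := by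
      calc m * (Real.log ((T:ℝ) + 1) - Real.log t - 1)
          ≤ m * ∑ u ∈ Icc (t + 1) T, (1:ℝ) / u :=
            mul_le_mul_of_nonneg_left (harmonic_lb t T ht.1 ht.2) hm.le
        _ = ∑ u ∈ Icc (t + 1) T, m / u := by
            rw [Finset.mul_sum]
            exact Finset.sum_congr rfl (fun u _ => by rw [mul_one_div])
        _ ≤ ∑ u ∈ Icc (t + 1) T, η u := by
            apply Finset.sum_le_sum
            intro u hu
            rw [Finset.mem_Icc] at hu
            exact (hband u (Finset.mem_Icc.2 ⟨by omega, hu.2⟩)).1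
    have h2 : Real.exp (-τ * μ * ∑ u ∈ Icc (t + 1) T, η u) ≤
        Real.exp c * (t:ℝ) ^ c / ((T:ℝ) + 1) ^ c := by
      have hτμ : -(τ * μ) ≤ 0 := by nlinarith
      have h' := mul_le_mul_of_nonpos_left hS hτμ
      have hb : -τ * μ * ∑ u ∈ Icc (t + 1) T, η u
          ≤ c + c * Real.log t - c * Real.log ((T:ℝ) + 1) := by
        calc -τ * μ * ∑ u ∈ Icc (t + 1) T, η u
            = -(τ * μ) * ∑ u ∈ Icc (t + 1) T, η u := by ring
          _ ≤ -(τ * μ) * (m * (Real.log ((T:ℝ) + 1) - Real.log t - 1)) := h'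
          _ = c + c * Real.log t - c * Real.log ((T:ℝ) + 1) := by rw [hc]; ring
      calc Real.exp (-τ * μ * ∑ u ∈ Icc (t + 1) T, η u)
          ≤ Real.exp (c + c * Real.log t - c * Real.log ((T:ℝ) + 1)) := Real.exp_le_exp.2 hb
        _ = Real.exp c * (t:ℝ) ^ c / ((T:ℝ) + 1) ^ c := by
            rw [Real.rpow_def_of_pos htpos, Real.rpow_def_of_pos hTpos,
              ← Real.exp_add, ← Real.exp_sub]
            ring_nf
    have htα : (0:ℝ) < (t:ℝ) ^ α := Real.rpow_pos_of_pos htpos α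
    have htα2 : (0:ℝ) < (t:ℝ) ^ (2 * α) := Real.rpow_pos_of_pos htpos _
    have hTc : (0:ℝ) < ((T:ℝ) + 1) ^ c := Real.rpow_pos_of_pos hTpos c
    have h3 : (M / (t:ℝ) ^ α) ^ 2 * (Real.exp c * (t:ℝ) ^ c / ((T:ℝ) + 1) ^ c)
        = M ^ 2 * Real.exp c / ((T:ℝ) + 1) ^ c * (t:ℝ) ^ (c - 2 * α) := by
      rw [div_pow, ← Real.rpow_natCast ((t:ℝ) ^ α) 2, ← Real.rpow_mul htpos.le,
        Real.rpow_sub htpos]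
      push_cast
      rw [mul_comm α 2]
      have h2α : (0:ℝ) < (t:ℝ) ^ (2 * α) := Real.rpow_pos_of_pos htpos _
      field_simp
    calc η t ^ 2 * Real.exp (-τ * μ * ∑ u ∈ Icc (t + 1) T, η u)
        ≤ (M / (t:ℝ) ^ α) ^ 2 * (Real.exp c * (t:ℝ) ^ c / ((T:ℝ) + 1) ^ c) :=
          mul_le_mul h1 h2 (Real.exp_nonneg _) (by positivity)
      _ = _ := h3
  have hrne : c - 2 * α ≠ -1 := by
    intro h; apply hcne; linarith
  have hsum := sum_rpow_le (c - 2 * α) hrne T hT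
  have hTc : (0:ℝ) < ((T:ℝ) + 1) ^ c := Real.rpow_pos_of_pos hTpos c
  have h2 : c - 2 * α + 1 ≠ 0 := by intro h; apply hrne; linarith
  calc ∑ t ∈ Icc 1 T, η t ^ 2 * Real.exp (-τ * μ * ∑ u ∈ Icc (t + 1) T, η u)
      ≤ ∑ t ∈ Icc 1 T, M ^ 2 * Real.exp c / ((T:ℝ) + 1) ^ c * (t:ℝ) ^ (c - 2 * α) :=
        Finset.sum_le_sum key
    _ = M ^ 2 * Real.exp c / ((T:ℝ) + 1) ^ c * ∑ t ∈ Icc 1 T, (t:ℝ) ^ (c - 2 * α) := by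
        rw [Finset.mul_sum]
    _ ≤ M ^ 2 * Real.exp c / ((T:ℝ) + 1) ^ c *
        (1 + (((T:ℝ) + 1) ^ (c - 2 * α + 1) - 1) / (c - 2 * α + 1)) :=
        mul_le_mul_of_nonneg_left hsum (by positivity)
    _ = M ^ 2 * Real.exp c *
        (1 / ((T:ℝ) + 1) ^ c +
          (((T:ℝ) + 1) ^ (c - 2 * α + 1) - 1) /
            ((c - 2 * α + 1) * ((T:ℝ) + 1) ^ c)) := by
        field_simp
        try ring_nf
        try exact Or.inl trivial
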